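/- arXiv:1410.1834 — 3 statements merged into one kernel-verified Lean document; each statement's English description precedes it below -/
import Mathlib

section
/- Let A be a real 2×2 matrix with ‖A‖ ≤ C (operator norm) and with two real eigenvalues λ₁, λ₂ having unit eigenvectors e₁, e₂ respectively, with e₁ ≠ ±e₂. Then |λ₁ - λ₂| ≤ 2C · min( ‖e₂ - e₁‖/‖e₁ + e₂‖ , ‖e₁ + e₂‖/‖e₁ - e₂‖ ). -/
open scoped RealInnerProductSpace

/-- For a linear operator `A` on the Euclidean plane with operator norm at most
`C`, having real eigenvalues `λ₁, λ₂` with unit eigenvectors `e₁, e₂` (with `e₁ ≠ ±e₂`),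
we have `|λ₁ - λ₂| ≤ 2C · min(‖e₂-e₁‖/‖e₁+e₂‖, ‖e₁+e₂‖/‖e₁-e₂‖)`. -/
theorem stmt0 (A : EuclideanSpace ℝ (Fin 2) →L[ℝ] EuclideanSpace ℝ (Fin 2)) (C : ℝ)
    (hC : ‖A‖ ≤ C) (lam₁ lam₂ : ℝ) (e₁ e₂ : EuclideanSpace ℝ (Fin 2))
    (he₁ : ‖e₁‖ = 1) (he₂ : ‖e₂‖ = 1)
    (hAe₁ : A e₁ = lam₁ • e₁) (hAe₂ : A e₂ = lam₂ • e₂)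
    (hne : e₁ ≠ e₂) (hne' : e₁ ≠ -e₂) :
    |lam₁ - lam₂| ≤ 2 * C * min (‖e₂ - e₁‖ / ‖e₁ + e₂‖) (‖e₁ + e₂‖ / ‖e₁ - e₂‖) := by
  have hCnn : 0 ≤ C := le_trans (norm_nonneg A) hC
  have hvne : e₂ - e₁ ≠ 0 := sub_ne_zero.mpr (fun h => hne h.symm)
  have hune : e₁ + e₂ ≠ 0 := by
    intro h
    exact hne' (by linear_combination (norm := module) h)
  have hv : 0 < ‖e₂ - e₁‖ := norm_pos_iff.mpr hvne
  have hu : 0 < ‖e₁ + e₂‖ := norm_pos_iff.mpr hune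
  have hAu : A (e₁ + e₂) = lam₁ • e₁ + lam₂ • e₂ := by
    rw [map_add, hAe₁, hAe₂]
  have hAv : A (e₂ - e₁) = lam₂ • e₂ - lam₁ • e₁ := by
    rw [map_sub, hAe₁, hAe₂]
  have hn1 : ⟪e₁, e₁⟫ = 1 := by
    rw [real_inner_self_eq_norm_sq, he₁]; norm_num
  have hn2 : ⟪e₂, e₂⟫ = 1 := by
    rw [real_inner_self_eq_norm_sq, he₂]; norm_num
  have hv2 : ‖e₂ - e₁‖ ^ 2 = 2 - 2 * ⟪e₁, e₂⟫ := by
    rw [← real_inner_self_eq_norm_sq]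
    simp only [inner_sub_left, inner_sub_right, hn1, hn2, real_inner_comm e₂ e₁]
    ring
  have hu2 : ‖e₁ + e₂‖ ^ 2 = 2 + 2 * ⟪e₁, e₂⟫ := by
    rw [← real_inner_self_eq_norm_sq]
    simp only [inner_add_left, inner_add_right, hn1, hn2, real_inner_comm e₂ e₁]
    ring
  have hinner1 : ⟪A (e₁ + e₂), e₂ - e₁⟫ = (lam₂ - lam₁) / 2 * ‖e₂ - e₁‖ ^ 2 := by
    rw [hAu, hv2]
    simp only [inner_add_left, inner_sub_right, real_inner_smul_left, hn1, hn2,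
      real_inner_comm e₂ e₁]
    ring
  have hinner2 : ⟪A (e₂ - e₁), e₁ + e₂⟫ = (lam₂ - lam₁) / 2 * ‖e₁ + e₂‖ ^ 2 := by
    rw [hAv, hu2]
    simp only [inner_sub_left, inner_add_right, real_inner_smul_left, hn1, hn2,
      real_inner_comm e₂ e₁]
    ring
  have hAub : ‖A (e₁ + e₂)‖ ≤ C * ‖e₁ + e₂‖ :=
    le_trans (A.le_opNorm _) (mul_le_mul_of_nonneg_right hC (norm_nonneg _))
  have hAvb : ‖A (e₂ - e₁)‖ ≤ C * ‖e₂ - e₁‖ :=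
    le_trans (A.le_opNorm _) (mul_le_mul_of_nonneg_right hC (norm_nonneg _))
  -- bound 1: |λ₁-λ₂| ≤ 2C‖u‖/‖v‖  (from ⟪Au,v⟫)
  have hcs1 : |⟪A (e₁ + e₂), e₂ - e₁⟫| ≤ C * ‖e₁ + e₂‖ * ‖e₂ - e₁‖ :=
    le_trans (abs_real_inner_le_norm _ _)
      (mul_le_mul_of_nonneg_right hAub (norm_nonneg _))
  have hcs2 : |⟪A (e₂ - e₁), e₁ + e₂⟫| ≤ C * ‖e₂ - e₁‖ * ‖e₁ + e₂‖ :=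
    le_trans (abs_real_inner_le_norm _ _)
      (mul_le_mul_of_nonneg_right hAvb (norm_nonneg _))
  rw [hinner1, abs_mul, abs_of_nonneg (by positivity : (0:ℝ) ≤ ‖e₂ - e₁‖ ^ 2)] at hcs1
  rw [hinner2, abs_mul, abs_of_nonneg (by positivity : (0:ℝ) ≤ ‖e₁ + e₂‖ ^ 2)] at hcs2
  have habs : |lam₁ - lam₂| = 2 * |(lam₂ - lam₁) / 2| := by
    rw [abs_sub_comm, abs_div, abs_two]; ring
  rcases le_total (‖e₂ - e₁‖ / ‖e₁ + e₂‖) (‖e₁ + e₂‖ / ‖e₁ - e₂‖) with h | h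
  · rw [inf_eq_left.mpr h, habs, ← mul_div_assoc, le_div_iff₀ hu]
    nlinarith [abs_nonneg ((lam₂ - lam₁) / 2)]
  · rw [inf_eq_right.mpr h, show ‖e₁ - e₂‖ = ‖e₂ - e₁‖ from norm_sub_rev _ _, habs,
      ← mul_div_assoc, le_div_iff₀ hv]
    nlinarith [abs_nonneg ((lam₂ - lam₁) / 2)]
end

section
/- Let U(t), S(t) be two C¹ families of symmetric n×n matrices each satisfying the Riccati equation Ġ + G·H_pp·G + G·H_qp + H_pq·G + H_qq = 0 along a common curve, and let δq(t) satisfy δq̇ = (H_qp + H_pp·U)δq. Then d/dt ( δqᵀ (U - S) δq ) = δqᵀ (U - S) H_pp (U - S) δq. In particular if H_pp is positive semidefinite, t ↦ δqᵀ(U-S)δq is nondecreasing. -/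
open Matrix


lemma quadform_deriv {n : ℕ} (M : ℝ → Matrix (Fin n) (Fin n) ℝ)
    (M' : Matrix (Fin n) (Fin n) ℝ) (v : ℝ → Fin n → ℝ) (v' : Fin n → ℝ) (t : ℝ)
    (hM : ∀ i j, HasDerivAt (fun s => M s i j) (M' i j) t)
    (hv : HasDerivAt v v' t) :
    HasDerivAt (fun s => v s ⬝ᵥ (M s).mulVec (v s))
      (v' ⬝ᵥ (M t).mulVec (v t) + (v t ⬝ᵥ M'.mulVec (v t) + v t ⬝ᵥ (M t).mulVec v')) t := by
  have hvi : ∀ i, HasDerivAt (fun s => v s i) (v' i) t := fun i => (hasDerivAt_pi.mp hv) i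
  have key : HasDerivAt (fun s => ∑ i, ∑ j, v s i * (M s i j * v s j))
      (∑ i, ∑ j, (v' i * (M t i j * v t j) +
        v t i * (M' i j * v t j + M t i j * v' j))) t := by
    refine HasDerivAt.fun_sum fun i _ => HasDerivAt.fun_sum fun j _ => ?_
    exact (hvi i).mul ((hM i j).mul (hvi j))
  have e1 : (fun s => ∑ i, ∑ j, v s i * (M s i j * v s j))
      = fun s => v s ⬝ᵥ (M s).mulVec (v s) := by
    funext s; simp [dotProduct, mulVec, Finset.mul_sum]
  have e2 : (∑ i, ∑ j, (v' i * (M t i j * v t j) +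
        v t i * (M' i j * v t j + M t i j * v' j)))
      = v' ⬝ᵥ (M t).mulVec (v t) + (v t ⬝ᵥ M'.mulVec (v t) + v t ⬝ᵥ (M t).mulVec v') := by
    simp [dotProduct, mulVec, Finset.mul_sum, Finset.sum_add_distrib, mul_add]
  rw [← e1, ← e2]
  exact key

lemma mulVec_dot {n : ℕ} (A : Matrix (Fin n) (Fin n) ℝ) (v y : Fin n → ℝ) :
    A.mulVec v ⬝ᵥ y = v ⬝ᵥ Aᵀ.mulVec y := by
  rw [dotProduct_comm, dotProduct_mulVec, ← mulVec_transpose, dotProduct_comm]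

/-- Let `U(t), S(t)` be `C¹` families of symmetric matrices solving the same
Riccati equation `Ġ + G·Hpp·G + G·Hqp + Hpq·G + Hqq = 0` (with `Hpq = Hqpᵀ`, `Hpp, Hqq`
symmetric) and let `δq` solve `δq̇ = (Hqp + Hpp·U)δq`. Then
`d/dt (δqᵀ(U-S)δq) = δqᵀ(U-S)·Hpp·(U-S)δq`; in particular if `Hpp ≥ 0` then
`t ↦ δqᵀ(U-S)δq` is nondecreasing. -/
theorem stmt10 (n : ℕ) (Hpp Hqp Hpq Hqq U U' S S' : ℝ → Matrix (Fin n) (Fin n) ℝ)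
    (δq : ℝ → (Fin n → ℝ))
    (hHppsymm : ∀ t, (Hpp t).IsSymm) (hHqqsymm : ∀ t, (Hqq t).IsSymm)
    (hHpq : ∀ t, Hpq t = (Hqp t)ᵀ)
    (hUsymm : ∀ t, (U t).IsSymm) (hSsymm : ∀ t, (S t).IsSymm)
    (hU' : ∀ t i j, HasDerivAt (fun s => U s i j) (U' t i j) t)
    (hS' : ∀ t i j, HasDerivAt (fun s => S s i j) (S' t i j) t)
    (hUric : ∀ t, U' t + U t * Hpp t * U t + U t * Hqp t + Hpq t * U t + Hqq t = 0)
    (hSric : ∀ t, S' t + S t * Hpp t * S t + S t * Hqp t + Hpq t * S t + Hqq t = 0)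
    (hδq : ∀ t, HasDerivAt δq (((Hqp t + Hpp t * U t).mulVec (δq t))) t) :
    (∀ t, HasDerivAt (fun s => δq s ⬝ᵥ ((U s - S s).mulVec (δq s)))
        (δq t ⬝ᵥ (((U t - S t) * Hpp t * (U t - S t)).mulVec (δq t))) t) ∧
      ((∀ t, (Hpp t).PosSemidef) →
        Monotone fun t => δq t ⬝ᵥ ((U t - S t).mulVec (δq t))) := by
  have main : ∀ t, HasDerivAt (fun s => δq s ⬝ᵥ ((U s - S s).mulVec (δq s)))
      (δq t ⬝ᵥ (((U t - S t) * Hpp t * (U t - S t)).mulVec (δq t))) t := by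
    intro t
    set A := Hqp t + Hpp t * U t with hA
    set W := U t - S t with hW
    set W' := U' t - S' t with hW'
    have hM : ∀ i j, HasDerivAt (fun s => (U s - S s) i j) (W' i j) t := by
      intro i j
      have := (hU' t i j).fun_sub (hS' t i j)
      exact this
    have hder := quadform_deriv (fun s => U s - S s) W' δq (A.mulVec (δq t)) t hM (hδq t)
    have hU'eq : U' t = -(U t * Hpp t * U t + (U t * Hqp t + (Hpq t * U t + Hqq t))) := by
      have h := hUric t
      simp only [add_assoc] at h
      exact eq_neg_of_add_eq_zero_left h
    have hS'eq : S' t = -(S t * Hpp t * S t + (S t * Hqp t + (Hpq t * S t + Hqq t))) := by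
      have h := hSric t
      simp only [add_assoc] at h
      exact eq_neg_of_add_eq_zero_left h
    have hkey : Aᵀ * W + (W' + W * A) = W * Hpp t * W := by
      rw [hA, hW, hW', hU'eq, hS'eq, transpose_add, transpose_mul,
        (hUsymm t), (hHppsymm t), ← hHpq t]
      noncomm_ring
    have hval : A.mulVec (δq t) ⬝ᵥ W.mulVec (δq t) +
        (δq t ⬝ᵥ W'.mulVec (δq t) + δq t ⬝ᵥ W.mulVec (A.mulVec (δq t)))
        = δq t ⬝ᵥ ((U t - S t) * Hpp t * (U t - S t)).mulVec (δq t) := by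
      rw [mulVec_dot, mulVec_mulVec, ← hW, ← hkey]
      simp [add_mulVec, dotProduct_add, mulVec_mulVec]
    rw [← hval]
    exact hder
  refine ⟨main, fun hpos => ?_⟩
  apply monotone_of_deriv_nonneg
  · exact fun t => ((main t).differentiableAt)
  · intro t
    rw [(main t).deriv]
    have hWsymm : (U t - S t)ᵀ = U t - S t := by
      rw [transpose_sub, (hUsymm t), (hSsymm t)]
    have : δq t ⬝ᵥ ((U t - S t) * Hpp t * (U t - S t)).mulVec (δq t)
        = ((U t - S t).mulVec (δq t)) ⬝ᵥ (Hpp t).mulVec ((U t - S t).mulVec (δq t)) := by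
      rw [mulVec_dot, hWsymm, ← mulVec_mulVec, ← mulVec_mulVec]
    rw [this]
    have := (hpos t).dotProduct_mulVec_nonneg ((U t - S t).mulVec (δq t))
    simpa using this
end

section
/- With the notation of the previous statement, suppose additionally H_pp(t) ≥ m·I for some m > 0 and U(t) - S(t) ≥ 0 with smallest positive eigenvalue of U(t)-S(t) at least q₊(t) on the orthogonal complement of its kernel, and δq(t) ∉ ker(U(t)-S(t)). Then d/dt ( δqᵀ(U-S)δq ) ≥ m·q₊(t)·( δqᵀ(U-S)δq ), hence by Grönwall, δq(T)ᵀ(U-S)(T)δq(T) ≥ exp(∫₀ᵀ m·q₊(t)dt) · δq(0)ᵀ(U-S)(0)δq(0). -/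
open Matrix intervalIntegral

lemma aux_psd {n : ℕ} {A : Matrix (Fin n) (Fin n) ℝ} (hA : A.PosSemidef) {c : ℝ}
    (hc : ∀ lam ∈ spectrum ℝ A, lam ≠ 0 → c ≤ lam) : (A * A - c • A).PosSemidef := by
  have hH := hA.1
  set V : Matrix (Fin n) (Fin n) ℝ := (hH.eigenvectorUnitary : Matrix (Fin n) (Fin n) ℝ) with hV
  set d : Fin n → ℝ := hH.eigenvalues with hd
  have hsV : star V * V = 1 := mem_unitaryGroup_iff'.mp hH.eigenvectorUnitary.2
  have hspec : A = V * diagonal d * star V := by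
    simpa [RCLike.ofReal_real_eq_id] using hH.spectral_theorem
  have hsq : A * A - c • A = V * diagonal (fun i => d i * d i - c * d i) * star V := by
    rw [hspec]
    have h1 : (V * diagonal d * star V) * (V * diagonal d * star V)
        = V * (diagonal d * diagonal d) * star V := by
      calc (V * diagonal d * star V) * (V * diagonal d * star V)
          = V * (diagonal d * ((star V * V) * (diagonal d * star V))) := by
            simp only [Matrix.mul_assoc]
        _ = V * (diagonal d * diagonal d) * star V := by
            rw [hsV, Matrix.one_mul]; simp only [Matrix.mul_assoc]
    rw [h1]
    have h2 : c • (V * diagonal d * star V) = V * (c • diagonal d) * star V := by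
      rw [Matrix.mul_smul, Matrix.smul_mul]
    rw [h2, ← Matrix.sub_mul, ← Matrix.mul_sub, diagonal_mul_diagonal, ← diagonal_smul,
      ← diagonal_sub]
    rfl
  rw [hsq, Matrix.star_eq_conjTranspose V]
  refine (posSemidef_diagonal_iff.mpr fun i => ?_).mul_mul_conjTranspose_same V
  rcases eq_or_ne (d i) 0 with h | h
  · simp [h]
  · have h1 : c ≤ d i := hc _ (hH.eigenvalues_mem_spectrum_real i) h
    have h2 : 0 ≤ d i := hA.eigenvalues_nonneg i
    nlinarith

lemma key_id {n : ℕ} (Hpp Hqp Hqq U U' S S' : Matrix (Fin n) (Fin n) ℝ)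
    (hHpp : Hppᵀ = Hpp) (hU : Uᵀ = U)
    (hUr : U' + U * Hpp * U + U * Hqp + Hqpᵀ * U + Hqq = 0)
    (hSr : S' + S * Hpp * S + S * Hqp + Hqpᵀ * S + Hqq = 0) :
    (Hqp + Hpp * U)ᵀ * (U - S) + (U' - S') + (U - S) * (Hqp + Hpp * U)
      = (U - S) * Hpp * (U - S) := by
  have hU' : U' = -(U * Hpp * U + U * Hqp + Hqpᵀ * U + Hqq) :=
    eq_neg_of_add_eq_zero_left (by rw [← hUr]; noncomm_ring)
  have hS' : S' = -(S * Hpp * S + S * Hqp + Hqpᵀ * S + Hqq) :=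
    eq_neg_of_add_eq_zero_left (by rw [← hSr]; noncomm_ring)
  rw [hU', hS', transpose_add, transpose_mul, hHpp, hU]
  noncomm_ring

lemma aux_part1 {n : ℕ} {A H : Matrix (Fin n) (Fin n) ℝ} {m c : ℝ} (x : Fin n → ℝ)
    (hm : 0 ≤ m) (hA : A.PosSemidef) (hH : (H - m • (1 : Matrix (Fin n) (Fin n) ℝ)).PosSemidef)
    (hc : (A * A - c • A).PosSemidef) :
    m * c * (x ⬝ᵥ A *ᵥ x) ≤ x ⬝ᵥ (A * H * A) *ᵥ x := by
  have hsd : ∀ (y z : Fin n → ℝ), y ⬝ᵥ A *ᵥ z = A *ᵥ y ⬝ᵥ z := by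
    intro y z
    rw [Matrix.dotProduct_mulVec, ← mulVec_transpose,
      ← Matrix.conjTranspose_eq_transpose_of_trivial, hA.1.eq]
  set w := A *ᵥ x with hw
  have hAH : x ⬝ᵥ (A * H * A) *ᵥ x = w ⬝ᵥ H *ᵥ w := by
    rw [← mulVec_mulVec, ← mulVec_mulVec, hsd]
  have hAA : x ⬝ᵥ (A * A) *ᵥ x = w ⬝ᵥ w := by
    rw [← mulVec_mulVec, hsd]
  have h1 : m * (w ⬝ᵥ w) ≤ w ⬝ᵥ H *ᵥ w := by
    have := hH.dotProduct_mulVec_nonneg w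
    simp only [star_trivial, Matrix.sub_mulVec, dotProduct_sub, Matrix.smul_mulVec,
      Matrix.one_mulVec, dotProduct_smul, smul_eq_mul] at this
    linarith
  have h2 : c * (x ⬝ᵥ A *ᵥ x) ≤ w ⬝ᵥ w := by
    have := hc.dotProduct_mulVec_nonneg x
    simp only [star_trivial, Matrix.sub_mulVec, dotProduct_sub, Matrix.smul_mulVec,
      dotProduct_smul, smul_eq_mul] at this
    linarith [hAA]
  calc m * c * (x ⬝ᵥ A *ᵥ x) = m * (c * (x ⬝ᵥ A *ᵥ x)) := by ring
    _ ≤ m * (w ⬝ᵥ w) := mul_le_mul_of_nonneg_left h2 hm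
    _ ≤ w ⬝ᵥ H *ᵥ w := h1
    _ = x ⬝ᵥ (A * H * A) *ᵥ x := hAH.symm

lemma aux_sum {n : ℕ} (A A' B : Matrix (Fin n) (Fin n) ℝ) (x : Fin n → ℝ) :
    x ⬝ᵥ (Bᵀ * A + A' + A * B) *ᵥ x
      = ∑ i, ((B *ᵥ x) i * ∑ j, A i j * x j +
          x i * ∑ j, (A' i j * x j + A i j * (B *ᵥ x) j)) := by
  set v := B *ᵥ x with hv
  have step : ∀ i, v i * ∑ j, A i j * x j + x i * ∑ j, (A' i j * x j + A i j * v j)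
      = v i * (A *ᵥ x) i + x i * ((A' *ᵥ x) i + (A *ᵥ v) i) := by
    intro i
    simp [mulVec, dotProduct, Finset.sum_add_distrib]
  rw [Finset.sum_congr rfl fun i _ => step i]
  have : ∑ i, (v i * (A *ᵥ x) i + x i * ((A' *ᵥ x) i + (A *ᵥ v) i))
      = v ⬝ᵥ (A *ᵥ x) + (x ⬝ᵥ (A' *ᵥ x) + x ⬝ᵥ (A *ᵥ v)) := by
    simp [dotProduct, Finset.sum_add_distrib, mul_add]
  rw [this]
  have hT1 : x ⬝ᵥ Bᵀ *ᵥ (A *ᵥ x) = v ⬝ᵥ (A *ᵥ x) := by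
    rw [Matrix.dotProduct_mulVec x Bᵀ, vecMul_transpose]
  simp only [Matrix.add_mulVec, dotProduct_add, ← mulVec_mulVec, hT1]
  ring

/-- In the setting of Statement 10, suppose moreover `Hpp(t) ≥ m·I` with `m > 0`,
`U(t) - S(t) ≥ 0` with all its positive eigenvalues at least `q₊(t)`, and
`δq(t) ∉ ker(U(t) - S(t))`. Then `d/dt (δqᵀ(U-S)δq) ≥ m·q₊(t)·(δqᵀ(U-S)δq)` and hence, by
Grönwall, `δq(T)ᵀ(U-S)(T)δq(T) ≥ exp(∫₀ᵀ m·q₊) · δq(0)ᵀ(U-S)(0)δq(0)`. -/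
theorem stmt11 (n : ℕ) (Hpp Hqp Hpq Hqq U U' S S' : ℝ → Matrix (Fin n) (Fin n) ℝ)
    (δq : ℝ → (Fin n → ℝ)) (m : ℝ) (qp : ℝ → ℝ)
    (hHppsymm : ∀ t, (Hpp t).IsSymm) (hHqqsymm : ∀ t, (Hqq t).IsSymm)
    (hHpq : ∀ t, Hpq t = (Hqp t)ᵀ)
    (hUsymm : ∀ t, (U t).IsSymm) (hSsymm : ∀ t, (S t).IsSymm)
    (hU' : ∀ t i j, HasDerivAt (fun s => U s i j) (U' t i j) t)
    (hS' : ∀ t i j, HasDerivAt (fun s => S s i j) (S' t i j) t)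
    (hUric : ∀ t, U' t + U t * Hpp t * U t + U t * Hqp t + Hpq t * U t + Hqq t = 0)
    (hSric : ∀ t, S' t + S t * Hpp t * S t + S t * Hqp t + Hpq t * S t + Hqq t = 0)
    (hδq : ∀ t, HasDerivAt δq (((Hqp t + Hpp t * U t).mulVec (δq t))) t)
    (hm : 0 < m)
    (hHppm : ∀ t, (Hpp t - m • (1 : Matrix (Fin n) (Fin n) ℝ)).PosSemidef)
    (hUS : ∀ t, (U t - S t).PosSemidef)
    (hqp : ∀ t, 0 < qp t) (hqpcont : Continuous qp)
    (hqplow : ∀ t, ∀ lam ∈ spectrum ℝ (U t - S t), lam ≠ 0 → qp t ≤ lam)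
    (hker : ∀ t, (U t - S t).mulVec (δq t) ≠ 0) :
    (∀ t, m * qp t * (δq t ⬝ᵥ ((U t - S t).mulVec (δq t))) ≤
        δq t ⬝ᵥ (((U t - S t) * Hpp t * (U t - S t)).mulVec (δq t))) ∧
      ∀ T, 0 ≤ T →
        Real.exp (∫ t in (0 : ℝ)..T, m * qp t) * (δq 0 ⬝ᵥ ((U 0 - S 0).mulVec (δq 0))) ≤
          δq T ⬝ᵥ ((U T - S T).mulVec (δq T)) := by
  have part1 : ∀ t, m * qp t * (δq t ⬝ᵥ ((U t - S t).mulVec (δq t))) ≤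
      δq t ⬝ᵥ (((U t - S t) * Hpp t * (U t - S t)).mulVec (δq t)) := fun t =>
    aux_part1 (δq t) hm.le (hUS t) (hHppm t) (aux_psd (hUS t) (hqplow t))
  refine ⟨part1, ?_⟩
  set g : ℝ → ℝ := fun s => δq s ⬝ᵥ (U s - S s) *ᵥ δq s with hgdef
  set G : ℝ → ℝ := fun t => δq t ⬝ᵥ ((U t - S t) * Hpp t * (U t - S t)) *ᵥ δq t with hGdef
  have hg : ∀ t, HasDerivAt g (G t) t := by
    intro t
    set B := Hqp t + Hpp t * U t with hB
    set v := B *ᵥ δq t with hv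
    have hvi : ∀ i, HasDerivAt (fun s => δq s i) (v i) t := fun i =>
      hasDerivAt_pi.mp (hδq t) i
    have hAij : ∀ i j, HasDerivAt (fun s => (U s - S s) i j) ((U' t - S' t) i j) t := by
      intro i j
      exact (hU' t i j).sub (hS' t i j)
    have hsum : HasDerivAt (fun s => ∑ i, δq s i * ∑ j, (U s - S s) i j * δq s j)
        (∑ i, (v i * ∑ j, (U t - S t) i j * δq t j +
          δq t i * ∑ j, ((U' t - S' t) i j * δq t j + (U t - S t) i j * v j))) t := by
      refine HasDerivAt.fun_sum fun i _ => (hvi i).mul (HasDerivAt.fun_sum fun j _ => ?_)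
      exact (hAij i j).mul (hvi j)
    have hfun : (fun s => ∑ i, δq s i * ∑ j, (U s - S s) i j * δq s j) = g := by
      funext s; simp [hgdef, dotProduct, mulVec]
    rw [hfun] at hsum
    convert hsum using 1
    have hid := key_id (Hpp t) (Hqp t) (Hqq t) (U t) (U' t) (S t) (S' t)
      (hHppsymm t) (hUsymm t) (by rw [← hHpq t]; exact hUric t) (by rw [← hHpq t]; exact hSric t)
    calc G t = δq t ⬝ᵥ (Bᵀ * (U t - S t) + (U' t - S' t) + (U t - S t) * B) *ᵥ δq t := by
          rw [hGdef]; simp only [hB]; rw [hid]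
      _ = _ := by rw [aux_sum (U t - S t) (U' t - S' t) B (δq t)]
  intro T hT
  set f : ℝ → ℝ := fun t => m * qp t with hf
  have hfc : Continuous f := continuous_const.mul hqpcont
  set F : ℝ → ℝ := fun u => ∫ t in (0:ℝ)..u, f t with hF
  have hFd : ∀ b, HasDerivAt F (f b) b := fun b =>
    integral_hasDerivAt_right (hfc.intervalIntegrable 0 b)
      (hfc.stronglyMeasurableAtFilter _ _) hfc.continuousAt
  set h : ℝ → ℝ := fun u => Real.exp (-F u) * g u with hh
  have hhd : ∀ u, HasDerivAt h (Real.exp (-F u) * -f u * g u + Real.exp (-F u) * G u) u :=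
    fun u => ((hFd u).neg.exp).mul (hg u)
  have hmono : Monotone h :=
    monotone_of_hasDerivAt_nonneg
      (f' := fun u => Real.exp (-F u) * -f u * g u + Real.exp (-F u) * G u) hhd (by
        intro u
        have hgG : m * qp u * g u ≤ G u := part1 u
        have he := Real.exp_pos (-F u)
        have hfu : f u = m * qp u := rfl
        have key := mul_nonneg he.le (sub_nonneg.mpr hgG)
        simp only [Pi.zero_apply, hfu]
        nlinarith [key])
  have hmono' := hmono hT
  have hF0 : F 0 = 0 := integral_same
  rw [hh] at hmono'
  simp only [hF0, neg_zero, Real.exp_zero, one_mul] at hmono'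
  have hepos := Real.exp_pos (F T)
  have hfin := mul_le_mul_of_nonneg_left hmono' hepos.le
  rw [← mul_assoc, ← Real.exp_add, add_neg_cancel, Real.exp_zero, one_mul] at hfin
  exact hfin
end
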